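/- Let n and b be natural numbers with n ≥ 2, b ≥ 2 and b not congruent to 1 modulo 3. Then the genus of T_{b'}(n), i.e., the cardinality of ℕ \ T_{b'}(n), equals 3b + (b^(2n)·(b³ + b² − b − 1) + b^n·(b²·(n+1) − (n+3)))/2. -/

import Mathlib

/-- The Thabit numerical semigroup of the second kind base `b`: the additive submonoid of ℕ
generated by `{(b+1)·b^(n+i) + 1 : i ∈ ℕ}`. -/
def thabitSemigroup2 (b n : ℕ) : AddSubmonoid ℕ :=
  AddSubmonoid.closure {m : ℕ | ∃ i : ℕ, m = (b + 1) * b ^ (n + i) + 1}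

/-- Sum of ⌊M/b^i⌋ over i ≥ 1. -/
def tee (b M : ℕ) : ℕ :=
  if _h : 2 ≤ b ∧ b ≤ M then M / b + tee b (M / b) else 0
decreasing_by exact Nat.div_lt_self (by omega) (by omega)

/-- Digit sum of M in base b. -/
def tsd (b M : ℕ) : ℕ :=
  if _h : 2 ≤ b ∧ 0 < M then M % b + tsd b (M / b) else 0
decreasing_by exact Nat.div_lt_self (by omega) (by omega)

section basics
variable {b M N : ℕ} (hb : 2 ≤ b)

lemma tee_zero : tee b 0 = 0 := by rw [tee]; exact dif_neg (by omega)

lemma tee_of_lt (h : M < b) : tee b M = 0 := by rw [tee]; exact dif_neg (by omega)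

include hb in
lemma tee_def (M : ℕ) : tee b M = M / b + tee b (M / b) := by
  rcases lt_or_ge M b with h | h
  · rw [tee_of_lt h, Nat.div_eq_of_lt h, tee_zero]
  · rw [tee]; rw [dif_pos ⟨hb, h⟩]

include hb in
lemma tee_mono : ∀ {M N : ℕ}, M ≤ N → tee b M ≤ tee b N := by
  intro M N h
  induction N using Nat.strong_induction_on generalizing M with
  | _ N ih =>
    rcases Nat.eq_zero_or_pos N with rfl | hN
    · have hM0 : M = 0 := by omega
      subst hM0; exact le_refl _
    · rw [tee_def hb M, tee_def hb N]
      have h1 : M / b ≤ N / b := Nat.div_le_div_right h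
      have h2 : N / b < N := Nat.div_lt_self hN (by omega)
      exact Nat.add_le_add h1 (ih _ h2 h1)

include hb in
lemma tee_mul_add (u r : ℕ) (hr : r < b) : tee b (b * u + r) = u + tee b u := by
  rw [tee_def hb]
  rw [Nat.mul_add_div (by omega), Nat.div_eq_of_lt hr, Nat.add_zero]

include hb in
lemma tee_superadd (M N : ℕ) : tee b M + tee b N ≤ tee b (M + N) := by
  have key : ∀ S M N : ℕ, M + N = S → tee b M + tee b N ≤ tee b (M + N) := by
    intro S
    induction S using Nat.strong_induction_on with
    | _ S ih =>
      intro M N hS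
      rcases Nat.eq_zero_or_pos (M + N) with h0 | h0
      · have hM0 : M = 0 := by omega
        have hN0 : N = 0 := by omega
        subst hM0; subst hN0
        simp [tee_zero]
      rw [tee_def hb M, tee_def hb N, tee_def hb (M + N)]
      have hdiv : M / b + N / b ≤ (M + N) / b := by
        rw [Nat.le_div_iff_mul_le (by omega : 0 < b)]
        have h1 := Nat.div_mul_le_self M b
        have h2 := Nat.div_mul_le_self N b
        have h3 := Nat.mod_lt M (show 0 < b by omega)
        nlinarith [Nat.mod_add_div M b, Nat.mod_add_div N b]
      have hlt : M / b + N / b < S := by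
        have h1 := Nat.div_le_self M b
        have h2 := Nat.div_le_self N b
        rcases Nat.eq_zero_or_pos M with rfl | hM
        · have hN : 0 < N := by omega
          have := Nat.div_lt_self hN (show 1 < b by omega)
          simp only [Nat.zero_div, Nat.zero_add]
          omega
        · have := Nat.div_lt_self hM (show 1 < b by omega)
          omega
      have hih := ih _ hlt (M / b) (N / b) rfl
      have hmono := tee_mono hb hdiv
      omega
  exact key _ M N rfl

lemma tsd_zero : tsd b 0 = 0 := by rw [tsd]; exact dif_neg (by omega)

include hb in
lemma tsd_def (M : ℕ) (hM : 0 < M) : tsd b M = M % b + tsd b (M / b) := by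
  rw [tsd]; rw [dif_pos ⟨hb, hM⟩]

include hb in
lemma tsd_add_tee (M : ℕ) : tsd b M + (b - 1) * tee b M = M := by
  induction M using Nat.strong_induction_on with
  | _ M ih =>
    rcases Nat.eq_zero_or_pos M with rfl | hM
    · simp [tsd_zero, tee_zero]
    rw [tsd_def hb M hM, tee_def hb M]
    have hlt : M / b < M := Nat.div_lt_self hM (by omega)
    have hih := ih _ hlt
    have hmd := Nat.mod_add_div M b
    have hdist : (b - 1) * (M / b + tee b (M / b)) = (b - 1) * (M / b) + (b - 1) * tee b (M / b) := by
      ring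
    have hsub : (b - 1) * (M / b) + M / b = b * (M / b) := by
      rw [Nat.sub_mul, one_mul]
      have : M / b ≤ b * (M / b) := Nat.le_mul_of_pos_left _ (by omega)
      omega
    omega

include hb in
lemma tsd_le (M : ℕ) : tsd b M ≤ M := by
  have := tsd_add_tee hb M; omega

include hb in
lemma tsd_of_lt (h : M < b) : tsd b M = M := by
  rcases Nat.eq_zero_or_pos M with rfl | hM
  · exact tsd_zero
  rw [tsd_def hb M hM, Nat.mod_eq_of_lt h, Nat.div_eq_of_lt h, tsd_zero]
  omega

include hb in
lemma div_le_tee (M : ℕ) : M / b ≤ tee b M := by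
  rw [tee_def hb M]; omega

include hb in
lemma tsd_lt_pow : ∀ j M : ℕ, M < b ^ j → tsd b M ≤ (b - 1) * j := by
  intro j
  induction j with
  | zero =>
    intro M hM
    rw [pow_zero] at hM
    have : M = 0 := by omega
    subst this; simp [tsd_zero]
  | succ j ih =>
    intro M hM
    rcases Nat.eq_zero_or_pos M with rfl | hM0
    · simp [tsd_zero]
    rw [tsd_def hb M hM0]
    have h1 : M / b < b ^ j := by
      rw [Nat.div_lt_iff_lt_mul (by omega : 0 < b)]
      calc M < b ^ (j + 1) := hM
        _ = b ^ j * b := by ring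
    have h2 := ih (M / b) h1
    have h3 : M % b < b := Nat.mod_lt _ (by omega)
    have h4 : (b - 1) * (j + 1) = (b - 1) * j + (b - 1) := by ring
    omega

include hb in
lemma tee_pow_rep : ∀ i : ℕ, ∃ k, k ≤ tee b (b ^ i) ∧ 1 + (b - 1) * k = b ^ i := by
  intro i
  induction i with
  | zero => exact ⟨0, by simp [tee_of_lt (show 1 < b by omega)], by simp⟩
  | succ i ih =>
    obtain ⟨k, hk, hk2⟩ := ih
    refine ⟨k + b ^ i, ?_, ?_⟩
    · have heq : tee b (b ^ (i + 1)) = b ^ i + tee b (b ^ i) := by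
        have := tee_mul_add hb (b ^ i) 0 (by omega)
        simpa [pow_succ, mul_comm] using this
      omega
    · have hdist : (b - 1) * (k + b ^ i) = (b - 1) * k + (b - 1) * b ^ i := by ring
      have e1 : (b - 1) * b ^ i + b ^ i = b * b ^ i := by
        rw [Nat.sub_mul, one_mul]
        have : b ^ i ≤ b * b ^ i := Nat.le_mul_of_pos_left _ (by omega)
        omega
      have e3 : b ^ (i + 1) = b * b ^ i := by rw [pow_succ, mul_comm]
      omega

end basics
section rep
variable {b : ℕ} (hb : 2 ≤ b)

include hb in
lemma exists_digit_rep : ∀ M : ℕ, ∃ m : Multiset ℕ,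
    (m.map (b ^ ·)).sum = M ∧ Multiset.card m = tsd b M := by
  intro M
  induction M using Nat.strong_induction_on with
  | _ M ih =>
    rcases Nat.eq_zero_or_pos M with rfl | hM
    · exact ⟨0, by simp, by simp [tsd_zero]⟩
    obtain ⟨m', h1, h2⟩ := ih (M / b) (Nat.div_lt_self hM (by omega))
    refine ⟨m'.map (· + 1) + Multiset.replicate (M % b) 0, ?_, ?_⟩
    · rw [Multiset.map_add, Multiset.sum_add, Multiset.map_map, Multiset.map_replicate]
      have hcong : Multiset.map ((b ^ ·) ∘ (· + 1)) m' = Multiset.map (fun i => b * b ^ i) m' := by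
        apply Multiset.map_congr rfl
        intro x _
        simp [pow_succ, mul_comm]
      rw [hcong, Multiset.sum_map_mul_left, h1, Multiset.sum_replicate]
      have := Nat.mod_add_div M b
      simp only [pow_zero, smul_eq_mul, mul_one]
      omega
    · rw [Multiset.card_add, Multiset.card_map, Multiset.card_replicate, h2,
        tsd_def hb M hM]
      omega

lemma exists_pos_mem {m : Multiset ℕ} (hb : 2 ≤ b)
    (h : Multiset.card m < (m.map (b ^ ·)).sum) : ∃ i, i + 1 ∈ m := by
  by_contra h'
  push_neg at h'
  have hall : ∀ x ∈ m, b ^ x = 1 := by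
    intro x hx
    cases x with
    | zero => simp
    | succ i => exact absurd hx (h' i)
  have : (m.map (b ^ ·)).sum = (m.map (fun _ => (1 : ℕ))).sum :=
    congrArg Multiset.sum (Multiset.map_congr rfl hall)
  rw [this, Multiset.map_const', Multiset.sum_replicate, smul_eq_mul, mul_one] at h
  omega

include hb in
lemma exists_rep_of_le_tee (M : ℕ) : ∀ k, k ≤ tee b M → ∃ m : Multiset ℕ,
    (m.map (b ^ ·)).sum = M ∧ Multiset.card m + (b - 1) * k = M := by
  have step : ∀ k, (∃ m : Multiset ℕ,
      (m.map (b ^ ·)).sum = M ∧ Multiset.card m + (b - 1) * (k + 1) = M) →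
      ∃ m : Multiset ℕ, (m.map (b ^ ·)).sum = M ∧ Multiset.card m + (b - 1) * k = M := by
    rintro k ⟨m, hm1, hm2⟩
    have hb1 : 1 * (k + 1) ≤ (b - 1) * (k + 1) := Nat.mul_le_mul_right _ (by omega)
    have hcard : Multiset.card m < (m.map (b ^ ·)).sum := by omega
    obtain ⟨i, hi⟩ := exists_pos_mem hb hcard
    have hc : (i + 1) ::ₘ m.erase (i + 1) = m := Multiset.cons_erase hi
    have hsum : (m.map (b ^ ·)).sum = b ^ (i + 1) + ((m.erase (i + 1)).map (b ^ ·)).sum := by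
      conv_lhs => rw [← hc]
      rw [Multiset.map_cons, Multiset.sum_cons]
    have hcards : Multiset.card m = Multiset.card (m.erase (i + 1)) + 1 := by
      conv_lhs => rw [← hc]
      rw [Multiset.card_cons]
    refine ⟨Multiset.replicate b i + m.erase (i + 1), ?_, ?_⟩
    · rw [Multiset.map_add, Multiset.sum_add, Multiset.map_replicate, Multiset.sum_replicate,
        smul_eq_mul]
      have hp : b * b ^ i = b ^ (i + 1) := by rw [pow_succ, mul_comm]
      omega
    · rw [Multiset.card_add, Multiset.card_replicate]
      have hd : (b - 1) * (k + 1) = (b - 1) * k + (b - 1) := by ring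
      omega
  have main : ∀ j k, k + j = tee b M → ∃ m : Multiset ℕ,
      (m.map (b ^ ·)).sum = M ∧ Multiset.card m + (b - 1) * k = M := by
    intro j
    induction j with
    | zero =>
      intro k hk
      obtain ⟨m, h1, h2⟩ := exists_digit_rep hb M
      refine ⟨m, h1, ?_⟩
      have := tsd_add_tee hb M
      have : k = tee b M := by omega
      subst this
      omega
    | succ j ih =>
      intro k hk
      exact step k (ih (k + 1) (by omega))
  intro k hk
  exact main (tee b M - k) k (by omega)

include hb in
lemma mem_thabit_iff (n x : ℕ) :
    x ∈ thabitSemigroup2 b n ↔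
    ∃ M k, k ≤ tee b M ∧ x + (b - 1) * k = ((b + 1) * b ^ n + 1) * M := by
  constructor
  · intro hx
    refine AddSubmonoid.closure_induction ?_ ?_ ?_ hx
    · rintro y ⟨i, rfl⟩
      obtain ⟨k, hk, hk2⟩ := tee_pow_rep hb i
      refine ⟨b ^ i, k, hk, ?_⟩
      have e1 : (b + 1) * b ^ (n + i) = (b + 1) * b ^ n * b ^ i := by
        rw [pow_add]; ring
      have e2 : ((b + 1) * b ^ n + 1) * b ^ i = (b + 1) * b ^ n * b ^ i + b ^ i := by ring
      omega
    · exact ⟨0, 0, by simp [tee_zero], by simp⟩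
    · rintro y z _ _ ⟨M, k, hk, hy⟩ ⟨M', k', hk', hz⟩
      refine ⟨M + M', k + k', ?_, ?_⟩
      · have := tee_superadd hb M M'
        omega
      · have e1 : ((b + 1) * b ^ n + 1) * (M + M')
            = ((b + 1) * b ^ n + 1) * M + ((b + 1) * b ^ n + 1) * M' := by ring
        have e2 : (b - 1) * (k + k') = (b - 1) * k + (b - 1) * k' := by ring
        omega
  · rintro ⟨M, k, hk, heq⟩
    obtain ⟨m, hm1, hm2⟩ := exists_rep_of_le_tee hb M k hk
    have hx : x = (b + 1) * b ^ n * M + Multiset.card m := by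
      have e1 : ((b + 1) * b ^ n + 1) * M = (b + 1) * b ^ n * M + M := by ring
      omega
    have hsum : (m.map (fun i => (b + 1) * b ^ n * b ^ i + 1)).sum
        = (b + 1) * b ^ n * M + Multiset.card m := by
      rw [Multiset.sum_map_add, Multiset.sum_map_mul_left, hm1, Multiset.map_const',
        Multiset.sum_replicate, smul_eq_mul, mul_one]
    have hmem : (m.map (fun i => (b + 1) * b ^ n * b ^ i + 1)).sum ∈ thabitSemigroup2 b n := by
      apply AddSubmonoid.multiset_sum_mem
      intro a ha
      rw [Multiset.mem_map] at ha
      obtain ⟨i, _, rfl⟩ := ha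
      apply AddSubmonoid.subset_closure
      exact ⟨i, by rw [pow_add]; ring⟩
    rw [hx, ← hsum]
    exact hmem

end rep
section count

lemma count_Ioo {d : ℕ} (hd : 0 < d) (L c r : ℕ) (hr : L % d = r) :
    ((Finset.range (L + d * c)).filter (fun x => L < x ∧ x % d = r)).card = c - 1 := by
  have himg : (Finset.range (L + d * c)).filter (fun x => L < x ∧ x % d = r)
      = (Finset.Ico 1 c).image (fun j => L + d * j) := by
    ext x
    simp only [Finset.mem_filter, Finset.mem_range, Finset.mem_image, Finset.mem_Ico]
    constructor
    · rintro ⟨hxB, hLx, hmod⟩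
      have hdxL : d ∣ x - L := (Nat.modEq_iff_dvd' (le_of_lt hLx)).mp (by
        show L % d = x % d
        omega)
      obtain ⟨j, hj⟩ := hdxL
      have hj1 : 1 ≤ j := by
        rcases Nat.eq_zero_or_pos j with rfl | h
        · omega
        · exact h
      have hjc : j < c := by
        by_contra hcon
        push_neg at hcon
        have : d * c ≤ d * j := Nat.mul_le_mul_left d hcon
        omega
      exact ⟨j, ⟨hj1, hjc⟩, by omega⟩
    · rintro ⟨j, ⟨hj1, hj2⟩, rfl⟩
      have h1 : d * 1 ≤ d * j := Nat.mul_le_mul_left d hj1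
      have h2 : d * (j + 1) ≤ d * c := Nat.mul_le_mul_left d hj2
      have h3 : d * (j + 1) = d * j + d := Nat.mul_succ d j
      refine ⟨by omega, by omega, by rw [Nat.add_mul_mod_self_left]; omega⟩
  rw [himg, Finset.card_image_of_injective _ (fun a a' ha => by
    have : d * a = d * a' := by omega
    exact Nat.eq_of_mul_eq_mul_left hd this), Nat.card_Ico]

lemma count_empty {B L : ℕ} (P : ℕ → Prop) [DecidablePred P] (h : B ≤ L) :
    ((Finset.range B).filter (fun x => L < x ∧ P x)).card = 0 := by
  rw [Finset.card_eq_zero]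
  apply Finset.filter_eq_empty_iff.mpr
  intro x hx
  rw [Finset.mem_range] at hx
  rintro ⟨h1, -⟩
  omega

lemma count_Io0 {d : ℕ} (hd : 0 < d) (r c : ℕ) (hr0 : 0 < r) (hrd : r < d) :
    ((Finset.range (r + d * c)).filter (fun x => 0 < x ∧ x % d = r)).card = c := by
  have himg : (Finset.range (r + d * c)).filter (fun x => 0 < x ∧ x % d = r)
      = (Finset.range c).image (fun j => r + d * j) := by
    ext x
    simp only [Finset.mem_filter, Finset.mem_range, Finset.mem_image]
    constructor
    · rintro ⟨hxB, hx0, hmod⟩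
      have hρx : r ≤ x := by
        have := Nat.mod_le x d
        omega
      have hdxL : d ∣ x - r := (Nat.modEq_iff_dvd' hρx).mp (by
        show r % d = x % d
        rw [hmod, Nat.mod_eq_of_lt hrd])
      obtain ⟨j, hj⟩ := hdxL
      have hjc : j < c := by
        by_contra hcon
        push_neg at hcon
        have : d * c ≤ d * j := Nat.mul_le_mul_left d hcon
        omega
      exact ⟨j, hjc, by omega⟩
    · rintro ⟨j, hj, rfl⟩
      have h2 : d * (j + 1) ≤ d * c := Nat.mul_le_mul_left d hj
      have h3 : d * (j + 1) = d * j + d := Nat.mul_succ d j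
      refine ⟨by omega, by omega, by rw [Nat.add_mul_mod_self_left, Nat.mod_eq_of_lt hrd]⟩
  rw [himg, Finset.card_image_of_injective _ (fun a a' ha => by
    have : d * a = d * a' := by omega
    exact Nat.eq_of_mul_eq_mul_left hd this), Finset.card_range]

end count

/-- The block of gaps associated to `M`. -/
def GG (b n M : ℕ) : Finset ℕ :=
  (Finset.range ((b + 1) * b ^ n * M + tsd b M)).filter
    (fun x => ((b + 1) * b ^ n + 1) * (M - (b - 1)) < x ∧ x % (b - 1) = 3 * M % (b - 1))

section facts
variable {b n : ℕ} (hb : 2 ≤ b) (hb3 : b % 3 ≠ 1)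

include hb hb3 in
lemma cop3 : Nat.Coprime 3 (b - 1) := by
  have h3 : ¬ (3 ∣ (b - 1)) := by
    rintro ⟨c, hc⟩
    omega
  exact (Nat.prime_three.coprime_iff_not_dvd).mpr h3

include hb in
lemma modeq_q1 : (b + 1) * b ^ n + 1 ≡ 3 [MOD b - 1] := by
  have hb1 : (1 : ℕ) ≡ b [MOD b - 1] := (Nat.modEq_iff_dvd' (by omega)).mpr dvd_rfl
  have hbn : b ^ n ≡ 1 [MOD b - 1] := by
    have := (hb1.symm).pow n
    simpa using this
  have hb2 : b + 1 ≡ 2 [MOD b - 1] := by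
    have := (hb1.symm).add_right 1
    simpa using this
  have := (hb2.mul hbn).add_right 1
  simpa using this

include hb in
lemma tsd_modeq (M : ℕ) : tsd b M ≡ M [MOD b - 1] := by
  have h := tsd_add_tee hb M
  exact (Nat.modEq_iff_dvd' (tsd_le hb M)).mpr ⟨tee b M, by omega⟩

include hb hb3 in
lemma class_cancel {M M' : ℕ} (h : 3 * M % (b - 1) = 3 * M' % (b - 1)) :
    M % (b - 1) = M' % (b - 1) :=
  Nat.ModEq.cancel_left_of_coprime (Nat.coprime_comm.mp (cop3 hb hb3)) h

include hb in
lemma card_GG_big {M : ℕ} (hM : b - 1 ≤ M) :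
    (GG b n M).card = (b + 1) * b ^ n - tee b M := by
  unfold GG
  set q := (b + 1) * b ^ n with hq
  set d := b - 1 with hd
  have hd0 : 0 < d := by omega
  have hst := tsd_add_tee hb M
  have hLmod : ((q + 1) * (M - d)) % d = 3 * M % d := by
    have h1 : (q + 1) * (M - d) ≡ 3 * (M - d) [MOD d] := (modeq_q1 hb).mul_right _
    have h2 : 3 * (M - d) % d = 3 * M % d := by
      have h3 : 3 * M = 3 * (M - d) + d * 3 := by omega
      rw [h3, Nat.add_mul_mod_self_left]
    unfold Nat.ModEq at h1
    omega
  rcases le_or_gt (tee b M) q with hle | hgt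
  · have hB : q * M + tsd b M = (q + 1) * (M - d) + d * (q + 1 - tee b M) := by
      have e1 : (q + 1) * (M - d) = q * (M - d) + (M - d) := by ring
      have e2 : d * (q + 1 - tee b M) + d * tee b M = d * (q + 1) := by
        rw [← Nat.mul_add]
        congr 1
        omega
      have e3 : q * M = q * (M - d) + q * d := by
        rw [← Nat.mul_add]
        congr 1
        omega
      have e4 : d * tee b M + tsd b M = M := by
        have h5 : d * tee b M = (b - 1) * tee b M := by rw [hd]
        omega
      have e5 : d * (q + 1) = d * q + d := by ring
      have e6 : q * d = d * q := by ring
      omega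
    rw [hB, count_Ioo hd0 _ _ _ hLmod]
    omega
  · rw [count_empty]
    · omega
    · have e1 : q * (M - d) + q * d = q * M := by
        rw [← Nat.mul_add]
        congr 1
        omega
      have e0 : (q + 1) * (M - d) = q * (M - d) + (M - d) := by ring
      have e2 : d * (q + 1) ≤ d * tee b M := Nat.mul_le_mul_left d (by omega)
      have e4 : d * tee b M + tsd b M = M := by
        have h5 : d * tee b M = (b - 1) * tee b M := by rw [hd]
        omega
      have e5 : d * (q + 1) = d * q + d := by ring
      have e6 : q * d = d * q := by ring
      omega

include hb hb3 in
lemma card_GG_small {M : ℕ} (hM0 : 0 < M) (hM : M < b - 1) :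
    (b - 1) * (GG b n M).card + 3 * M % (b - 1) = ((b + 1) * b ^ n + 1) * M := by
  unfold GG
  set q := (b + 1) * b ^ n with hq
  set d := b - 1 with hd
  have hd0 : 0 < d := by omega
  have hMd : M - d = 0 := by omega
  have hsd : tsd b M = M := tsd_of_lt hb (by omega)
  have hρd : 3 * M % d < d := Nat.mod_lt _ hd0
  have hρ0 : 0 < 3 * M % d := by
    rcases Nat.eq_zero_or_pos (3 * M % d) with h0 | h
    · exfalso
      have hdvd : d ∣ 3 * M := Nat.dvd_of_mod_eq_zero h0
      have hdM : d ∣ M := (cop3 hb hb3).symm.dvd_of_dvd_mul_left hdvd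
      have := Nat.le_of_dvd hM0 hdM
      omega
    · exact h
  have hqM : (q + 1) * M ≡ 3 * M [MOD d] := (modeq_q1 hb).mul_right M
  have hρle : 3 * M % d ≤ (q + 1) * M := by
    have hbn : 1 ≤ b ^ n := Nat.one_le_pow _ _ (by omega)
    have h31 : 3 * 1 ≤ (b + 1) * b ^ n := Nat.mul_le_mul (by omega) hbn
    have h3M : 3 * M ≤ (q + 1) * M := Nat.mul_le_mul_right M (by omega)
    have := Nat.mod_le (3 * M) d
    omega
  have hdvd : d ∣ (q + 1) * M - 3 * M % d := (Nat.modEq_iff_dvd' hρle).mp (by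
    show (3 * M % d) % d = ((q + 1) * M) % d
    rw [Nat.mod_mod_of_dvd _ dvd_rfl]
    exact hqM.symm)
  obtain ⟨c, hc⟩ := hdvd
  have hB : q * M + tsd b M = 3 * M % d + d * c := by
    have h6 : (q + 1) * M = q * M + M := by ring
    omega
  rw [hB]
  simp only [hMd, Nat.mul_zero]
  rw [count_Io0 hd0 _ c hρ0 hρd]
  omega

include hb in
lemma GG_zero : GG b n 0 = ∅ := by
  unfold GG
  simp [tsd_zero]

end facts
section gaps
variable {b n : ℕ} (hb : 2 ≤ b) (hb3 : b % 3 ≠ 1) (hn : 2 ≤ n)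

lemma mem_GG_iff {M x : ℕ} : x ∈ GG b n M ↔
    x < (b + 1) * b ^ n * M + tsd b M ∧
    ((b + 1) * b ^ n + 1) * (M - (b - 1)) < x ∧
    x % (b - 1) = 3 * M % (b - 1) := by
  unfold GG
  simp only [Finset.mem_filter, Finset.mem_range]

include hb in
lemma mem_GG_bound {M x : ℕ} (hx : x ∈ GG b n M) : M < b * ((b + 1) * b ^ n + 1) := by
  rw [mem_GG_iff] at hx
  obtain ⟨hxB, hxL, -⟩ := hx
  set q := (b + 1) * b ^ n with hq
  rcases lt_or_ge M b with h | h
  · have h1 : b * 1 ≤ b * (q + 1) := Nat.mul_le_mul_left b (by omega)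
    omega
  · have hst := tsd_add_tee hb M
    have e1 : (q + 1) * (M - (b - 1)) + (q + 1) * (b - 1) = (q + 1) * M := by
      rw [← Nat.mul_add]
      congr 1
      omega
    have e2 : (q + 1) * M = q * M + M := by ring
    have e3 : (q + 1) * (b - 1) = q * (b - 1) + (b - 1) := by ring
    have htq : tee b M ≤ q := by
      by_contra hcon
      push_neg at hcon
      have h4 : (b - 1) * (q + 1) ≤ (b - 1) * tee b M := Nat.mul_le_mul_left _ hcon
      have e4 : (b - 1) * (q + 1) = (q + 1) * (b - 1) := by ring
      omega
    have hdiv : M / b ≤ q := le_trans (div_le_tee hb M) htq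
    have h5 : b * (M / b) ≤ b * q := Nat.mul_le_mul_left b hdiv
    have h6 := Nat.mod_add_div M b
    have h7 : M % b < b := Nat.mod_lt _ (by omega)
    have e8 : b * (q + 1) = b * q + b := by ring
    omega

include hb hn in
lemma tsd_le_qd {M : ℕ} (hM : M < b * ((b + 1) * b ^ n + 1)) :
    tsd b M ≤ (b + 1) * b ^ n * (b - 1) := by
  set q := (b + 1) * b ^ n with hq
  have h1 : 1 ≤ b ^ n := Nat.one_le_pow _ _ (by omega)
  have hb2 : b + 1 + 1 ≤ b * b := by nlinarith
  have h2 : (b + 1 + 1) * b ^ n ≤ b * b * b ^ n := Nat.mul_le_mul_right _ hb2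
  have e1 : (b + 1 + 1) * b ^ n = q + b ^ n := by rw [hq]; ring
  have h3 : q + 1 ≤ b * b * b ^ n := by omega
  have h4 : b * (q + 1) ≤ b * (b * b * b ^ n) := Nat.mul_le_mul_left b h3
  have e2 : b * (b * b * b ^ n) = b ^ (n + 3) := by ring
  have h5 : M < b ^ (n + 3) := by omega
  have h6 := tsd_lt_pow hb (n + 3) M h5
  have h7 : n < b ^ n := Nat.lt_pow_self (by omega)
  have h8 : 3 * (n + 1) ≤ (b + 1) * b ^ n := Nat.mul_le_mul (by omega) (by omega)
  have h9 : n + 3 ≤ q := by omega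
  have h10 : (b - 1) * (n + 3) ≤ (b - 1) * q := Nat.mul_le_mul_left _ h9
  have e3 : (b - 1) * q = q * (b - 1) := by ring
  omega

include hb hb3 hn in
lemma not_mem_of_mem_GG {M x : ℕ} (hx : x ∈ GG b n M) : x ∉ thabitSemigroup2 b n := by
  have hbound := mem_GG_bound hb hx
  have htsdb := tsd_le_qd hb hn hbound
  rw [mem_GG_iff] at hx
  obtain ⟨hxB, hxL, hxmod⟩ := hx
  intro hS
  rw [mem_thabit_iff hb] at hS
  obtain ⟨M'', k, hk, heq⟩ := hS
  set q := (b + 1) * b ^ n with hq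
  have hd0 : 0 < b - 1 := by omega
  have hxle'' : x ≤ (q + 1) * M'' := by omega
  have hxmod'' : x % (b - 1) = 3 * M'' % (b - 1) := by
    have hdvdk : (b - 1) ∣ (q + 1) * M'' - x := ⟨k, by omega⟩
    have h1 : x % (b - 1) = ((q + 1) * M'') % (b - 1) :=
      (Nat.modEq_iff_dvd' hxle'').mpr hdvdk
    have h2 : (q + 1) * M'' ≡ 3 * M'' [MOD b - 1] := (modeq_q1 hb).mul_right M''
    unfold Nat.ModEq at h2
    omega
  have hclass : M % (b - 1) = M'' % (b - 1) :=
    class_cancel hb hb3 (hxmod.symm.trans hxmod'')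
  have hst'' := tsd_add_tee hb M''
  have hkd : (b - 1) * k ≤ (b - 1) * tee b M'' := Nat.mul_le_mul_left _ hk
  have e0 : (q + 1) * M'' = q * M'' + M'' := by ring
  have hxlow : q * M'' + tsd b M'' ≤ x := by omega
  rcases lt_trichotomy M M'' with hlt | heqM | hgt
  · have hdvd : (b - 1) ∣ M'' - M := (Nat.modEq_iff_dvd' hlt.le).mp hclass
    obtain ⟨t, ht⟩ := hdvd
    have ht1 : 1 ≤ t := by
      rcases Nat.eq_zero_or_pos t with rfl | h
      · omega
      · exact h
    have ht2 : (b - 1) * 1 ≤ (b - 1) * t := Nat.mul_le_mul_left _ ht1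
    have hMd'' : M + (b - 1) ≤ M'' := by omega
    have h1 : q * (M + (b - 1)) ≤ q * M'' := Nat.mul_le_mul_left q hMd''
    have h2 : q * (M + (b - 1)) = q * M + q * (b - 1) := by ring
    omega
  · subst heqM
    omega
  · have hdvd : (b - 1) ∣ M - M'' := (Nat.modEq_iff_dvd' hgt.le).mp hclass.symm
    obtain ⟨t, ht⟩ := hdvd
    have ht1 : 1 ≤ t := by
      rcases Nat.eq_zero_or_pos t with rfl | h
      · omega
      · exact h
    have ht2 : (b - 1) * 1 ≤ (b - 1) * t := Nat.mul_le_mul_left _ ht1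
    have h1 : M'' ≤ M - (b - 1) := by omega
    have h2 : (q + 1) * M'' ≤ (q + 1) * (M - (b - 1)) := Nat.mul_le_mul_left _ h1
    omega

include hb hb3 in
lemma image_mul3_mod : (Finset.range (b - 1)).image (fun M => 3 * M % (b - 1))
    = Finset.range (b - 1) := by
  have hd0 : 0 < b - 1 := by omega
  have hinj : ∀ M ∈ Finset.range (b - 1), ∀ M' ∈ Finset.range (b - 1),
      3 * M % (b - 1) = 3 * M' % (b - 1) → M = M' := by
    intro M hM M' hM' h
    rw [Finset.mem_range] at hM hM'
    have := class_cancel hb hb3 h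
    rw [Nat.mod_eq_of_lt hM, Nat.mod_eq_of_lt hM'] at this
    exact this
  apply Finset.eq_of_subset_of_card_le
  · intro y hy
    rw [Finset.mem_image] at hy
    obtain ⟨M, -, rfl⟩ := hy
    rw [Finset.mem_range]
    exact Nat.mod_lt _ hd0
  · rw [Finset.card_image_of_injOn hinj]

include hb hb3 hn in
lemma exists_GG_of_not_mem {x : ℕ} (hxS : x ∉ thabitSemigroup2 b n) :
    ∃ M, M < b * ((b + 1) * b ^ n + 1) ∧ x ∈ GG b n M := by
  set q := (b + 1) * b ^ n with hq
  have hd0 : 0 < b - 1 := by omega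
  have hx0 : x ≠ 0 := by
    rintro rfl
    exact hxS (zero_mem _)
  have hP : ∃ M, x ≤ (q + 1) * M ∧ 3 * M % (b - 1) = x % (b - 1) := by
    have hmem : x % (b - 1) ∈ Finset.range (b - 1) := Finset.mem_range.mpr (Nat.mod_lt _ hd0)
    rw [← image_mul3_mod hb hb3, Finset.mem_image] at hmem
    obtain ⟨M₀, -, h₀⟩ := hmem
    refine ⟨M₀ + (b - 1) * x, ?_, ?_⟩
    · have h1 : 1 * x ≤ (b - 1) * x := Nat.mul_le_mul_right x hd0
      have h2 : 1 * (M₀ + (b - 1) * x) ≤ (q + 1) * (M₀ + (b - 1) * x) :=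
        Nat.mul_le_mul_right _ (by omega)
      omega
    · have e : 3 * (M₀ + (b - 1) * x) = 3 * M₀ + (b - 1) * (3 * x) := by ring
      rw [e, Nat.add_mul_mod_self_left, h₀]
  obtain ⟨M, hPM, hPmin⟩ : ∃ M, (x ≤ (q + 1) * M ∧ 3 * M % (b - 1) = x % (b - 1)) ∧
      ∀ m, m < M → ¬(x ≤ (q + 1) * m ∧ 3 * m % (b - 1) = x % (b - 1)) :=
    ⟨Nat.find hP, Nat.find_spec hP, fun m hm => Nat.find_min hP hm⟩
  have hxB : x < q * M + tsd b M := by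
    by_contra hcon
    push_neg at hcon
    have hmod : x % (b - 1) = ((q + 1) * M) % (b - 1) := by
      have h2 : (q + 1) * M ≡ 3 * M [MOD b - 1] := (modeq_q1 hb).mul_right M
      unfold Nat.ModEq at h2
      omega
    have hdvd : (b - 1) ∣ (q + 1) * M - x := (Nat.modEq_iff_dvd' hPM.1).mp hmod
    obtain ⟨k, hk⟩ := hdvd
    have hst := tsd_add_tee hb M
    have e0 : (q + 1) * M = q * M + M := by ring
    have hkle : k ≤ tee b M := by
      have h1 : (b - 1) * k ≤ (b - 1) * tee b M := by omega
      exact Nat.le_of_mul_le_mul_left h1 hd0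
    refine hxS ((mem_thabit_iff hb n x).mpr ⟨M, k, hkle, ?_⟩)
    have e1 : ((b + 1) * b ^ n + 1) * M = (q + 1) * M := by rw [hq]
    omega
  have hxL : (q + 1) * (M - (b - 1)) < x := by
    rcases lt_or_ge M (b - 1) with hMd | hMd
    · have h0 : M - (b - 1) = 0 := by omega
      rw [h0, Nat.mul_zero]
      omega
    · by_contra hcon
      push_neg at hcon
      refine hPmin (M - (b - 1)) (by omega) ⟨hcon, ?_⟩
      have e : 3 * M = 3 * (M - (b - 1)) + (b - 1) * 3 := by omega
      have h2 := hPM.2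
      rw [e, Nat.add_mul_mod_self_left] at h2
      exact h2
  have hmem : x ∈ GG b n M := by
    rw [mem_GG_iff]
    exact ⟨hxB, hxL, hPM.2.symm⟩
  exact ⟨M, mem_GG_bound hb hmem, hmem⟩

include hb hb3 in
lemma GG_disjoint {M M' : ℕ} (hne : M ≠ M') : Disjoint (GG b n M) (GG b n M') := by
  have aux : ∀ A A' x : ℕ, A < A' → x ∈ GG b n A → x ∈ GG b n A' → False := by
    intro A A' x hlt hx hx'
    rw [mem_GG_iff] at hx hx'
    set q := (b + 1) * b ^ n with hq
    have hd0 : 0 < b - 1 := by omega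
    have hclass : A % (b - 1) = A' % (b - 1) := class_cancel hb hb3 (hx.2.2.symm.trans hx'.2.2)
    have hdvd : (b - 1) ∣ A' - A := (Nat.modEq_iff_dvd' hlt.le).mp hclass
    obtain ⟨t, ht⟩ := hdvd
    have ht1 : 1 ≤ t := by
      rcases Nat.eq_zero_or_pos t with rfl | h
      · omega
      · exact h
    have ht2 : (b - 1) * 1 ≤ (b - 1) * t := Nat.mul_le_mul_left _ ht1
    have h1 : A ≤ A' - (b - 1) := by omega
    have h2 : (q + 1) * A ≤ (q + 1) * (A' - (b - 1)) := Nat.mul_le_mul_left _ h1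
    have h3 := tsd_le hb A
    have e0 : (q + 1) * A = q * A + A := by ring
    omega
  rw [Finset.disjoint_left]
  intro x hx hx'
  rcases hne.lt_or_gt with h | h
  · exact aux _ _ x h hx hx'
  · exact aux _ _ x h hx' hx

include hb hb3 hn in
lemma gaps_eq : {x : ℕ | x ∉ thabitSemigroup2 b n}
    = ↑((Finset.range (b * ((b + 1) * b ^ n + 1))).biUnion (GG b n)) := by
  ext x
  simp only [Set.mem_setOf_eq, Finset.coe_biUnion, Set.mem_iUnion, Finset.mem_coe,
    Finset.mem_range]
  constructor
  · intro h
    obtain ⟨M, hM, hmem⟩ := exists_GG_of_not_mem hb hb3 hn h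
    exact ⟨M, hM, hmem⟩
  · rintro ⟨M, -, hmem⟩
    exact not_mem_of_mem_GG hb hb3 hn hmem

end gaps
/-- Sum of `tee b M` for `M < T`, as an integer. -/
def tEi (b T : ℕ) : ℤ := ∑ M ∈ Finset.range T, (tee b M : ℤ)

section sums
variable {b : ℕ} (hb : 2 ≤ b)

lemma tEi_small {T : ℕ} (hT : T ≤ b) : tEi b T = 0 := by
  unfold tEi
  apply Finset.sum_eq_zero
  intro M hM
  rw [Finset.mem_range] at hM
  rw [tee_of_lt (by omega)]
  rfl

include hb in
lemma tEi_append (X r : ℕ) (hr : r ≤ b) :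
    tEi b (b * X + r) = tEi b (b * X) + r * ((X : ℤ) + (tee b X : ℤ)) := by
  unfold tEi
  rw [Finset.range_eq_Ico,
    ← Finset.sum_Ico_consecutive (fun M => ((tee b M : ℕ) : ℤ))
      (Nat.zero_le (b * X)) (Nat.le_add_right _ r),
    ← Finset.range_eq_Ico, Finset.sum_Ico_eq_sum_range]
  simp only [Nat.add_sub_cancel_left]
  congr 1
  have hcong : ∀ j ∈ Finset.range r, ((tee b (b * X + j) : ℕ) : ℤ) = (X : ℤ) + (tee b X : ℤ) := by
    intro j hj
    rw [Finset.mem_range] at hj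
    rw [tee_mul_add hb X j (by omega)]
    push_cast
    ring
  rw [Finset.sum_congr rfl hcong, Finset.sum_const, Finset.card_range, nsmul_eq_mul]

include hb in
lemma tEi_mul : ∀ X : ℕ, 2 * tEi b (b * X) = 2 * (b : ℤ) * tEi b X + (b : ℤ) * (X : ℤ) * ((X : ℤ) - 1) := by
  intro X
  induction X with
  | zero =>
    rw [Nat.mul_zero]
    unfold tEi
    simp
  | succ X ih =>
    have h1 : b * (X + 1) = b * X + b := Nat.mul_succ b X
    have h2 : tEi b (X + 1) = tEi b X + (tee b X : ℤ) := by
      unfold tEi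
      rw [Finset.sum_range_succ]
    rw [h1, tEi_append hb X b (le_refl b), h2]
    push_cast
    linear_combination ih

include hb in
lemma tee_block : ∀ m : ℕ, tee b (b ^ m * (b * b - 1)) + 2 = (b + 1) * b ^ m := by
  intro m
  induction m with
  | zero =>
    have hbb : 1 ≤ b * b := by nlinarith
    have h : b * b = b * (b - 1) + b := by
      rw [← Nat.mul_succ]
      congr 1
      omega
    have e : b ^ 0 * (b * b - 1) = b * (b - 1) + (b - 1) := by
      rw [pow_zero, one_mul]
      omega
    rw [e, tee_mul_add hb (b - 1) (b - 1) (by omega), tee_of_lt (by omega), pow_zero]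
    omega
  | succ m ih =>
    have e : b ^ (m + 1) * (b * b - 1) = b * (b ^ m * (b * b - 1)) + 0 := by
      rw [pow_succ]
      ring
    rw [e, tee_mul_add hb _ 0 (by omega)]
    have hbb : 1 ≤ b * b := by nlinarith
    have h1 : b ^ m * (b * b - 1) + b ^ m = b ^ m * (b * b) := by
      rw [← Nat.mul_succ]
      congr 1
      omega
    have e1 : (b + 1) * b ^ (m + 1) = b ^ m * (b * b) + b * b ^ m := by
      rw [pow_succ]
      ring
    have e2 : (b + 1) * b ^ m = b ^ m + b * b ^ m := by ring
    omega

include hb in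
lemma tEi_block : ∀ m : ℕ, 2 * tEi b (b ^ m * (b * b - 1)) =
    ((b : ℤ) - 1) * (((b : ℤ) + 1) ^ 2 * ((b : ℤ) ^ m) ^ 2
      - (2 * (b : ℤ) + 3) * (b : ℤ) ^ m - ((b : ℤ) + 1) * (m : ℤ) * (b : ℤ) ^ m) := by
  have hbb : (1 : ℕ) ≤ b * b := by nlinarith
  have hb1 : (1 : ℕ) ≤ b := by omega
  intro m
  induction m with
  | zero =>
    have h : b * b = b * (b - 1) + b := by
      rw [← Nat.mul_succ]
      congr 1
      omega
    have e : b ^ 0 * (b * b - 1) = b * (b - 1) + (b - 1) := by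
      rw [pow_zero, one_mul]
      omega
    have h5 : tee b (b - 1) = 0 := tee_of_lt (by omega)
    rw [e, tEi_append hb (b - 1) (b - 1) (by omega), h5]
    have h3 := tEi_mul hb (b - 1)
    have h4 : tEi b (b - 1) = 0 := tEi_small (by omega)
    rw [h4] at h3
    push_cast [Nat.cast_sub hb1] at h3 ⊢
    linear_combination h3
  | succ m ih =>
    have e : b ^ (m + 1) * (b * b - 1) = b * (b ^ m * (b * b - 1)) := by
      rw [pow_succ]
      ring
    rw [e]
    have h := tEi_mul hb (b ^ m * (b * b - 1))
    push_cast [Nat.cast_sub hbb] at h ih ⊢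
    linear_combination h + (b : ℤ) * ih

end sums
theorem thabit2_genus (n b : ℕ) (hn : 2 ≤ n) (hb : 2 ≤ b) (hb3 : b % 3 ≠ 1) :
    2 * (Set.ncard {m : ℕ | m ∉ thabitSemigroup2 b n} : ℤ)
      = 6 * (b : ℤ)
        + (b : ℤ) ^ (2 * n) * ((b : ℤ) ^ 3 + (b : ℤ) ^ 2 - (b : ℤ) - 1)
        + (b : ℤ) ^ n * ((b : ℤ) ^ 2 * ((n : ℤ) + 1) - ((n : ℤ) + 3)) := by
  obtain ⟨m, rfl⟩ : ∃ m, n = m + 2 := ⟨n - 2, by omega⟩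
  have hd0 : 0 < b - 1 := by omega
  have hbb : (1 : ℕ) ≤ b * b := by nlinarith
  obtain ⟨q, hqdef⟩ : ∃ q, q = (b + 1) * b ^ (m + 2) := ⟨_, rfl⟩
  obtain ⟨Z, hZdef⟩ : ∃ Z, Z = b ^ m * (b * b - 1) := ⟨_, rfl⟩
  obtain ⟨X, hXdef⟩ : ∃ X, X = b * Z + 2 := ⟨_, rfl⟩
  obtain ⟨Y, hYdef⟩ : ∃ Y, Y = b * X := ⟨_, rfl⟩
  obtain ⟨K, hKdef⟩ : ∃ K, K = b * (q + 1) := ⟨_, rfl⟩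
  -- basic numeric facts
  have hZ1 : 3 ≤ Z := by
    have h1 : 1 ≤ b ^ m := Nat.one_le_pow _ _ (by omega)
    have h2 : 3 ≤ b * b - 1 := by
      have : 4 ≤ b * b := by nlinarith
      omega
    rw [hZdef]
    calc 3 = 1 * 3 := by norm_num
      _ ≤ b ^ m * (b * b - 1) := Nat.mul_le_mul h1 h2
  have hXq : X ≤ q + 1 := by
    have e0 : b * Z + b ^ (m + 1) = b ^ (m + 1) * (b * b - 1) + b ^ (m + 1) := by
      rw [hZdef]; ring
    have e1 : b ^ (m + 1) * (b * b - 1) + b ^ (m + 1) = b ^ (m + 1) * (b * b) := by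
      rw [← Nat.mul_succ]; congr 1; omega
    have e2 : b ^ (m + 1) * (b * b) = b * b ^ (m + 2) := by ring
    have e3 : b * b ^ (m + 2) ≤ (b + 1) * b ^ (m + 2) := Nat.mul_le_mul_right _ (by omega)
    have h4 : 2 ≤ b ^ (m + 1) := by
      calc 2 ≤ b := hb
        _ = b ^ 1 := (pow_one b).symm
        _ ≤ b ^ (m + 1) := Nat.pow_le_pow_right (by omega) (by omega)
    omega
  have hYK : Y ≤ K := by
    rw [hYdef, hKdef]
    exact Nat.mul_le_mul_left b hXq
  have hdY : b - 1 ≤ Y := by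
    have h1 : b * 1 ≤ b * X := Nat.mul_le_mul_left b (by omega)
    omega
  have hdK : b - 1 ≤ K := le_trans hdY hYK
  -- tee values
  have htz := tee_block hb m
  rw [← hZdef] at htz   -- tee b Z + 2 = (b+1) * b^m
  have e4 : Z + b ^ m = b ^ m * (b * b) := by
    rw [hZdef, ← Nat.mul_succ]; congr 1; omega
  have p1 : (b + 1) * (Z + b ^ m) = b * Z + Z + (b * b ^ m + b ^ m) := by ring
  have p2 : (b + 1) * (b ^ m * (b * b)) = (b + 1) * b ^ (m + 2) := by ring
  have p3 : (b + 1) * b ^ m = b * b ^ m + b ^ m := by ring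
  have p4 : (b + 1) * (Z + b ^ m) = (b + 1) * (b ^ m * (b * b)) := by rw [e4]
  have hteeX : Z + tee b Z ≤ tee b X := by
    have h5 : tee b (b * Z) = Z + tee b Z := by
      have := tee_mul_add hb Z 0 (by omega)
      simpa using this
    have h6 : tee b (b * Z) ≤ tee b X := tee_mono hb (by omega)
    omega
  have hteeY : q ≤ tee b Y := by
    have h6 : tee b (b * X) = X + tee b X := by
      have := tee_mul_add hb X 0 (by omega)
      simpa using this
    rw [hYdef, h6]
    omega
  have htY1 : tee b (Y - 1) + 1 = q := by
    have hX1 : X - 1 + 1 = X := by omega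
    have h2 : b * (X - 1 + 1) = b * (X - 1) + b := Nat.mul_succ b (X - 1)
    rw [hX1] at h2
    have harg : b * X - 1 = b * (X - 1) + (b - 1) := by omega
    have hXm1 : X - 1 = b * Z + 1 := by omega
    rw [hYdef, harg, tee_mul_add hb (X - 1) (b - 1) (by omega), hXm1,
      tee_mul_add hb Z 1 (by omega)]
    omega
  -- rewrite the gap set
  have hn' : 2 ≤ m + 2 := by omega
  rw [gaps_eq hb hb3 hn', Set.ncard_coe_finset,
    Finset.card_biUnion (fun x _ y _ hxy => GG_disjoint hb hb3 hxy), ← hqdef, ← hKdef]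
  -- split the sum
  rw [← Finset.sum_range_add_sum_Ico (fun M => (GG b (m + 2) M).card) hdK]
  obtain ⟨S1, hS1def⟩ : ∃ s, s = ∑ M ∈ Finset.range (b - 1), (GG b (m + 2) M).card := ⟨_, rfl⟩
  obtain ⟨S2, hS2def⟩ : ∃ s, s = ∑ M ∈ Finset.Ico (b - 1) K, (GG b (m + 2) M).card := ⟨_, rfl⟩
  rw [← hS1def, ← hS2def]
  -- evaluate S1
  have hterm : ∀ M ∈ Finset.range (b - 1),
      (b - 1) * (GG b (m + 2) M).card + 3 * M % (b - 1) = (q + 1) * M := by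
    intro M hM
    rw [Finset.mem_range] at hM
    rcases Nat.eq_zero_or_pos M with rfl | hM0
    · rw [GG_zero hb]
      simp
    · have h := card_GG_small (n := m + 2) hb hb3 hM0 hM
      rw [← hqdef] at h
      exact h
  have hsum1 : (b - 1) * S1 + (∑ M ∈ Finset.range (b - 1), 3 * M % (b - 1))
      = (q + 1) * ∑ M ∈ Finset.range (b - 1), M := by
    rw [hS1def, Finset.mul_sum, Finset.mul_sum, ← Finset.sum_add_distrib]
    exact Finset.sum_congr rfl hterm
  have hρ : ∑ M ∈ Finset.range (b - 1), 3 * M % (b - 1) = ∑ M ∈ Finset.range (b - 1), M := by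
    have hinj : ∀ M ∈ Finset.range (b - 1), ∀ M' ∈ Finset.range (b - 1),
        3 * M % (b - 1) = 3 * M' % (b - 1) → M = M' := by
      intro M hM M' hM' h
      rw [Finset.mem_range] at hM hM'
      have := class_cancel hb hb3 h
      rw [Nat.mod_eq_of_lt hM, Nat.mod_eq_of_lt hM'] at this
      exact this
    have h := Finset.sum_image (f := fun y => y) hinj
    rw [image_mul3_mod hb hb3] at h
    exact h.symm
  have hgauss := Finset.sum_range_id_mul_two (b - 1)
  have hd4 : b - 1 - 1 = b - 2 := by omega
  rw [hd4] at hgauss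
  -- cast S1 facts to ℤ
  obtain ⟨G, hGdef⟩ : ∃ g, g = ∑ M ∈ Finset.range (b - 1), M := ⟨_, rfl⟩
  obtain ⟨R, hRdef⟩ : ∃ r, r = ∑ M ∈ Finset.range (b - 1), 3 * M % (b - 1) := ⟨_, rfl⟩
  rw [← hGdef, ← hRdef] at hsum1
  rw [← hGdef, ← hRdef] at hρ
  rw [← hGdef] at hgauss
  have hsum1z : ((b : ℤ) - 1) * (S1 : ℤ) + (R : ℤ) = ((q : ℤ) + 1) * (G : ℤ) := by
    have h : (((b - 1) * S1 + R : ℕ) : ℤ) = (((q + 1) * G : ℕ) : ℤ) := by rw [hsum1]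
    push_cast [Nat.cast_sub (show 1 ≤ b by omega)] at h
    linarith [h]
  have hgaussz : (G : ℤ) * 2 = ((b : ℤ) - 1) * ((b : ℤ) - 2) := by
    have h2 : ((G * 2 : ℕ) : ℤ) = (((b - 1) * (b - 2) : ℕ) : ℤ) := by rw [hgauss]
    push_cast [Nat.cast_sub (show 1 ≤ b by omega), Nat.cast_sub (show 2 ≤ b by omega)] at h2
    linarith [h2]
  have hρz : (R : ℤ) = (G : ℤ) := by exact_mod_cast congrArg (fun t : ℕ => (t : ℤ)) hρ
  have hS1pre : ((b : ℤ) - 1) * (2 * (S1 : ℤ)) = ((b : ℤ) - 1) * ((q : ℤ) * ((b : ℤ) - 2)) := by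
    linear_combination 2 * hsum1z - 2 * hρz + (q : ℤ) * hgaussz
  have hbne : ((b : ℤ) - 1) ≠ 0 := by
    have : (2 : ℤ) ≤ (b : ℤ) := by exact_mod_cast hb
    omega
  have hS1int : 2 * (S1 : ℤ) = (q : ℤ) * ((b : ℤ) - 2) := mul_left_cancel₀ hbne hS1pre
  -- evaluate S2
  have hcards : S2 = ∑ M ∈ Finset.Ico (b - 1) K, (q - tee b M) := by
    rw [hS2def]
    apply Finset.sum_congr rfl
    intro M hM
    rw [Finset.mem_Ico] at hM
    have h := card_GG_big hb (n := m + 2) hM.1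
    rw [← hqdef] at h
    exact h
  have htail : ∑ M ∈ Finset.Ico Y K, (q - tee b M) = 0 := by
    apply Finset.sum_eq_zero
    intro M hM
    rw [Finset.mem_Ico] at hM
    have h1 : tee b Y ≤ tee b M := tee_mono hb hM.1
    omega
  have hsplit2 : ∑ M ∈ Finset.Ico (b - 1) K, (q - tee b M)
      = ∑ M ∈ Finset.Ico (b - 1) Y, (q - tee b M) := by
    rw [← Finset.sum_Ico_consecutive _ hdY hYK, htail, Nat.add_zero]
  have hS2cast : (S2 : ℤ) = ((Y : ℤ) - ((b : ℤ) - 1)) * (q : ℤ) - tEi b Y := by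
    rw [hcards, hsplit2, Nat.cast_sum]
    have hterm2 : ∀ M ∈ Finset.Ico (b - 1) Y,
        ((q - tee b M : ℕ) : ℤ) = (q : ℤ) - ((tee b M : ℕ) : ℤ) := by
      intro M hM
      rw [Finset.mem_Ico] at hM
      have h1 : tee b M ≤ tee b (Y - 1) := tee_mono hb (by omega)
      exact Nat.cast_sub (by omega)
    rw [Finset.sum_congr rfl hterm2, Finset.sum_sub_distrib, Finset.sum_const, Nat.card_Ico,
      Finset.sum_Ico_eq_sub (fun M => ((tee b M : ℕ) : ℤ)) hdY]
    have h7 : tEi b (b - 1) = 0 := tEi_small (by omega)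
    have h8 : (∑ M ∈ Finset.range Y, ((tee b M : ℕ) : ℤ)) = tEi b Y := rfl
    have h9 : (∑ M ∈ Finset.range (b - 1), ((tee b M : ℕ) : ℤ)) = tEi b (b - 1) := rfl
    rw [h8, h9, h7, nsmul_eq_mul]
    push_cast [Nat.cast_sub hdY, Nat.cast_sub (show 1 ≤ b by omega)]
    ring
  -- the integer pieces
  have hA := tEi_mul hb X
  have hB := tEi_append hb Z 2 hb
  have hC := tEi_mul hb Z
  have hD := tEi_block hb m
  have hE : ((tee b Z : ℕ) : ℤ) = ((b : ℤ) + 1) * (b : ℤ) ^ m - 2 := by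
    have h : ((tee b Z + 2 : ℕ) : ℤ) = (((b + 1) * b ^ m : ℕ) : ℤ) := by rw [htz]
    push_cast at h
    linarith [h]
  -- eliminate the defined quantities
  rw [hYdef] at hS2cast
  rw [hXdef] at hA hS2cast
  rw [hqdef] at hS1int hS2cast
  rw [hZdef] at hA hB hC hS2cast hE
  push_cast [Nat.cast_sub hbb] at hS1int hS2cast hA hB hC hD hE ⊢
  linear_combination hS1int + 2 * hS2cast - hA - 2 * (b : ℤ) * hB - (b : ℤ) * hC
    - (b : ℤ) ^ 2 * hD - 4 * (b : ℤ) * hE
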